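/- Let φ: [0,∞) → [0,∞) be a continuous function with φ(0)=0, and suppose there exist constants A>0, B≥0 and 0≤α<1 such that φ(t) ≤ A∫₀ᵗ φ(s) ds + B∫₀ᵗ φ(s)^α ds for all t≥0. Then φ(t) ≤ ((B/A)(e^{(1-α)At} - 1))^{1/(1-α)} for all t≥0. -/

import Mathlib

open MeasureTheory intervalIntegral Real Set

theorem nonlinear_gronwall
    (φ : ℝ → ℝ) (hcont : Continuous φ) (hnn : ∀ t, 0 ≤ φ t) (hφ0 : φ 0 = 0)
    (A B α : ℝ) (hA : 0 < A) (hB : 0 ≤ B) (hα0 : 0 ≤ α) (hα1 : α < 1)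
    (h : ∀ t, 0 ≤ t →
      φ t ≤ A * (∫ s in (0:ℝ)..t, φ s) + B * (∫ s in (0:ℝ)..t, (φ s) ^ α)) :
    ∀ t, 0 ≤ t →
      φ t ≤ ((B / A) * (Real.exp ((1 - α) * A * t) - 1)) ^ (1 / (1 - α)) := by
  intro t ht
  have h1α : (0:ℝ) < 1 - α := by linarith
  set K : ℝ := (1 - α) * A with hK
  have hKpos : 0 < K := mul_pos h1α hA
  have hφα : Continuous (fun s => φ s ^ α) :=
    hcont.rpow_const (fun x => Or.inr hα0)
  have hg : Continuous (fun s => A * φ s + B * φ s ^ α) := by continuity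
  have hgnn : ∀ s, 0 ≤ A * φ s + B * φ s ^ α := fun s => by
    have := hnn s
    have h2 : 0 ≤ φ s ^ α := Real.rpow_nonneg (hnn s) α
    positivity
  -- key estimate for each ε > 0
  have key : ∀ ε : ℝ, 0 < ε →
      φ t ≤ (ε ^ (1 - α) * Real.exp (K * t) + (B / A) * (Real.exp (K * t) - 1)) ^ (1 / (1 - α)) := by
    intro ε hε
    set u : ℝ → ℝ := fun x => ε + ∫ s in (0:ℝ)..x, (A * φ s + B * φ s ^ α) with hu
    have huε : ∀ x, 0 ≤ x → ε ≤ u x := by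
      intro x hx
      have : 0 ≤ ∫ s in (0:ℝ)..x, (A * φ s + B * φ s ^ α) :=
        intervalIntegral.integral_nonneg hx (fun s _ => hgnn s)
      simp only [hu]; linarith
    have hupos : ∀ x, 0 ≤ x → 0 < u x := fun x hx => lt_of_lt_of_le hε (huε x hx)
    have hφu : ∀ x, 0 ≤ x → φ x ≤ u x := by
      intro x hx
      have hsplit : ∫ s in (0:ℝ)..x, (A * φ s + B * φ s ^ α)
          = A * (∫ s in (0:ℝ)..x, φ s) + B * (∫ s in (0:ℝ)..x, φ s ^ α) := by
        rw [intervalIntegral.integral_add (f := fun s => A * φ s) (g := fun s => B * φ s ^ α) ((continuous_const.mul hcont).intervalIntegrable 0 x)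
          ((continuous_const.mul hφα).intervalIntegrable 0 x),
          intervalIntegral.integral_const_mul, intervalIntegral.integral_const_mul]
      have := h x hx
      simp only [hu, hsplit]
      linarith
    have hu' : ∀ x, HasDerivAt u (A * φ x + B * φ x ^ α) x := by
      intro x
      exact ((hg.integral_hasStrictDerivAt 0 x).hasDerivAt).const_add ε
    set v : ℝ → ℝ := fun x => u x ^ (1 - α) with hv
    have hucont : Continuous u := by
      have : Differentiable ℝ u := fun x => (hu' x).differentiableAt
      exact this.continuous
    have hvcont : Continuous v := hucont.rpow_const (fun x => Or.inr h1α.le)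
    have hv' : ∀ x, 0 ≤ x → HasDerivAt v
        ((1 - α) * u x ^ (-α) * (A * φ x + B * φ x ^ α)) x := by
      intro x hx
      have hne : u x ≠ 0 := (hupos x hx).ne'
      have := (Real.hasDerivAt_rpow_const (p := 1 - α) (Or.inl hne)).comp x (hu' x)
      rw [show -α = 1 - α - 1 by ring]
      exact this
    have hvnn : ∀ x, 0 ≤ x → 0 ≤ v x := fun x hx => Real.rpow_nonneg (hupos x hx).le _
    have hf'nn : ∀ x, 0 ≤ x → 0 ≤ (1 - α) * u x ^ (-α) * (A * φ x + B * φ x ^ α) := by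
      intro x hx
      have h1 : 0 ≤ u x ^ (-α) := Real.rpow_nonneg (hupos x hx).le _
      have h2 := hgnn x
      positivity
    have hbound : ∀ x, 0 ≤ x →
        (1 - α) * u x ^ (-α) * (A * φ x + B * φ x ^ α) ≤ K * v x + (1 - α) * B := by
      intro x hx
      have hup := hupos x hx
      have h1 : u x ^ (-α) * φ x ≤ u x ^ (1 - α) := by
        calc u x ^ (-α) * φ x ≤ u x ^ (-α) * u x :=
              mul_le_mul_of_nonneg_left (hφu x hx) (Real.rpow_nonneg hup.le _)
          _ = u x ^ (1 - α) := by
              nth_rewrite 2 [← Real.rpow_one (u x)]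
              rw [← Real.rpow_add hup]
              ring_nf
      have h2 : u x ^ (-α) * φ x ^ α ≤ 1 := by
        calc u x ^ (-α) * φ x ^ α ≤ u x ^ (-α) * u x ^ α :=
              mul_le_mul_of_nonneg_left
                (Real.rpow_le_rpow (hnn x) (hφu x hx) hα0) (Real.rpow_nonneg hup.le _)
          _ = 1 := by rw [← Real.rpow_add hup]; simp
      have heq : (1 - α) * u x ^ (-α) * (A * φ x + B * φ x ^ α)
          = (1 - α) * A * (u x ^ (-α) * φ x) + (1 - α) * B * (u x ^ (-α) * φ x ^ α) := by ring
      rw [heq, hK]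
      have hA1 : (1 - α) * A * (u x ^ (-α) * φ x) ≤ (1 - α) * A * (u x ^ (1 - α)) :=
        mul_le_mul_of_nonneg_left h1 (by positivity)
      have hB1 : (1 - α) * B * (u x ^ (-α) * φ x ^ α) ≤ (1 - α) * B * 1 :=
        mul_le_mul_of_nonneg_left h2 (by positivity)
      simp only [hv]
      nlinarith
    -- apply Gronwall on [0, t]
    have hgron := norm_le_gronwallBound_of_norm_deriv_right_le
      (f := v) (f' := fun x => (1 - α) * u x ^ (-α) * (A * φ x + B * φ x ^ α))
      (δ := ε ^ (1 - α)) (K := K) (ε := (1 - α) * B) (a := 0) (b := t)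
      (hvcont.continuousOn)
      (fun x hx => (hv' x hx.1).hasDerivWithinAt)
      (by
        have hu0 : u 0 = ε := by simp [hu]
        have : v 0 = ε ^ (1 - α) := by simp [hv, hu0]
        rw [Real.norm_of_nonneg (hvnn 0 le_rfl), this])
      (fun x hx => by
        rw [Real.norm_of_nonneg (hf'nn x hx.1), Real.norm_of_nonneg (hvnn x hx.1)]
        exact hbound x hx.1)
      t ⟨ht, le_rfl⟩
    rw [Real.norm_of_nonneg (hvnn t ht), gronwallBound_of_K_ne_0 hKpos.ne'] at hgron
    have hεK : (1 - α) * B / K = B / A := by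
      rw [hK]; field_simp
    rw [hεK, sub_zero] at hgron
    -- φ t ≤ u t = (v t) ^ (1/(1-α)) ≤ RHS
    have hut : u t = v t ^ (1 / (1 - α)) := by
      rw [hv, one_div, Real.rpow_rpow_inv (hupos t ht).le h1α.ne']
    calc φ t ≤ u t := hφu t ht
      _ = v t ^ (1 / (1 - α)) := hut
      _ ≤ (ε ^ (1 - α) * Real.exp (K * t) + B / A * (Real.exp (K * t) - 1)) ^ (1 / (1 - α)) :=
          Real.rpow_le_rpow (hvnn t ht) hgron (by positivity)
  -- take limit ε → 0+
  have hlim : Filter.Tendsto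
      (fun ε : ℝ => (ε ^ (1 - α) * Real.exp (K * t) + (B / A) * (Real.exp (K * t) - 1)) ^ (1 / (1 - α)))
      (nhdsWithin 0 (Set.Ioi 0))
      (nhds (((B / A) * (Real.exp (K * t) - 1)) ^ (1 / (1 - α)))) := by
    have h1 : Filter.Tendsto (fun ε : ℝ => ε ^ (1 - α)) (nhdsWithin 0 (Set.Ioi 0)) (nhds 0) := by
      have := (Real.continuousAt_rpow_const 0 (1 - α) (Or.inr h1α.le)).tendsto
      rw [Real.zero_rpow h1α.ne'] at this
      exact this.mono_left nhdsWithin_le_nhds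
    have h2 : Filter.Tendsto
        (fun ε : ℝ => ε ^ (1 - α) * Real.exp (K * t) + (B / A) * (Real.exp (K * t) - 1))
        (nhdsWithin 0 (Set.Ioi 0)) (nhds ((B / A) * (Real.exp (K * t) - 1))) := by
      have := (h1.mul_const (Real.exp (K * t))).add_const ((B / A) * (Real.exp (K * t) - 1))
      simpa using this
    exact ((Real.continuousAt_rpow_const _ (1 / (1 - α)) (Or.inr (by positivity))).tendsto.comp h2)
  have : φ t ≤ ((B / A) * (Real.exp (K * t) - 1)) ^ (1 / (1 - α)) := by
    refine ge_of_tendsto hlim ?_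
    filter_upwards [self_mem_nhdsWithin] with ε hε
    exact key ε hε
  simpa [hK, mul_assoc] using this
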